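/- Let r ≥ 0 and let ρ be a probability measure on ℝ^d supported in B_r = [-r,r]^d. For every n ≥ 1 and every p ≥ 1 with p < d, there exist points x_1,…,x_n ∈ ℝ^d such that the empirical measure μ^(n) = n^{-1} Σ_{k=1}^n δ_{x_k} satisfies W_p(μ^(n), ρ) ≤ 4r · (d/(d−p))^{1/p} · n^{-1/d}. -/

import Mathlib

open MeasureTheory Metric
set_option maxHeartbeats 1000000
open scoped ENNReal NNReal

section helpers
variable {α : Type*} {M : Type*} [AddCommMonoid M]

lemma sum_toList_map (s : Finset α) (f : α → M) : (s.toList.map f).sum = ∑ i ∈ s, f i := by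
  rw [← Multiset.sum_coe]
  have : ((s.toList.map f : List M) : Multiset M) = s.val.map f := by
    simp [← Multiset.map_coe]
  rw [this, Finset.sum]

lemma sum_flatten_map {β : Type*} (ls : List (List β)) (f : β → M) :
    (ls.flatten.map f).sum = (ls.map (fun l => (l.map f).sum)).sum := by
  induction ls with
  | nil => simp
  | cons h t ih => simp [ih]; rfl

lemma length_filter_flatten {β : Type*} (ls : List (List β)) (p : β → Bool) :
    (ls.flatten.filter p).length = (ls.map (fun l => (l.filter p).length)).sum := by
  induction ls with
  | nil => simp
  | cons h t ih => simp [List.filter_append, ih]; rfl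

end helpers

section carveNode
variable {E : Type*} [MeasurableSpace E]

lemma carve_node (σ : Measure E) [IsFiniteMeasure σ] {n : ℕ} (hn : 0 < n) :
    ∃ (M : ℕ) (τ δ : Measure E), σ = (M : ℝ≥0∞) • τ + δ ∧
      δ Set.univ < (n : ℝ≥0∞)⁻¹ ∧ δ ≤ σ ∧
      (M : ℝ≥0∞) * (n : ℝ≥0∞)⁻¹ ≤ σ Set.univ ∧
      (M ≠ 0 → τ Set.univ = (n : ℝ≥0∞)⁻¹ ∧ τ ≤ σ) := by
  set u : ℝ≥0∞ := (n : ℝ≥0∞)⁻¹ with hu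
  have hn' : (0:ℝ) < (n:ℝ) := by positivity
  have hu0 : u ≠ 0 := by simp [hu]
  have hu_top : u ≠ ∞ := by simp [hu, hn.ne']
  have key : ∀ m : ℕ, (m : ℝ≥0∞) * u = ENNReal.ofReal ((m : ℝ) / n) := by
    intro m
    rw [hu, ENNReal.ofReal_div_of_pos hn', ENNReal.ofReal_natCast, ENNReal.ofReal_natCast,
      div_eq_mul_inv]
  by_cases hlt : σ Set.univ < u
  · exact ⟨0, 0, σ, by simp, hlt, le_rfl, by simp, by simp⟩
  push_neg at hlt
  set T : ℝ≥0∞ := σ Set.univ with hT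
  have hT_top : T ≠ ∞ := (measure_lt_top σ _).ne
  have hT0 : T ≠ 0 := fun h => hu0 (le_antisymm (h ▸ hlt) (zero_le))
  obtain ⟨M, hM1, hM2⟩ : ∃ M : ℕ, (M : ℝ≥0∞) * u ≤ T ∧ T < ((M + 1 : ℕ) : ℝ≥0∞) * u := by
    refine ⟨⌊T.toReal * n⌋₊, ?_, ?_⟩
    · rw [key]
      calc ENNReal.ofReal ((⌊T.toReal * n⌋₊ : ℝ) / n)
          ≤ ENNReal.ofReal T.toReal := by
            refine ENNReal.ofReal_le_ofReal ?_
            rw [div_le_iff₀ hn']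
            exact Nat.floor_le (by positivity)
        _ = T := ENNReal.ofReal_toReal hT_top
    · rw [key]
      calc T = ENNReal.ofReal T.toReal := (ENNReal.ofReal_toReal hT_top).symm
        _ < ENNReal.ofReal (((⌊T.toReal * n⌋₊ + 1 : ℕ) : ℝ) / n) := by
            rw [ENNReal.ofReal_lt_ofReal_iff (by positivity), lt_div_iff₀ hn']
            push_cast
            exact Nat.lt_floor_add_one _
  have hfac : ∀ {c : ℝ≥0∞}, c ≤ 1 → c • σ ≤ σ := by
    intro c hc
    refine Measure.le_iff.mpr fun A hA => ?_
    simp only [Measure.smul_apply, smul_eq_mul]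
    exact mul_le_of_le_one_left (zero_le) hc
  have hone : u / T * (M : ℝ≥0∞) + (T - (M : ℝ≥0∞) * u) / T = 1 := by
    have e1 : u / T * (M : ℝ≥0∞) = (M : ℝ≥0∞) * u / T := by
      rw [div_eq_mul_inv, div_eq_mul_inv]; ring
    rw [e1, ENNReal.div_add_div_same, add_tsub_cancel_of_le hM1,
      ENNReal.div_self hT0 hT_top]
  refine ⟨M, (u / T) • σ, ((T - (M : ℝ≥0∞) * u) / T) • σ, ?_, ?_, ?_, hM1, fun hM0 => ⟨?_, ?_⟩⟩
  · ext A hA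
    simp only [Measure.add_apply, Measure.smul_apply, smul_eq_mul, ← mul_assoc]
    rw [← add_mul]
    nth_rewrite 1 [← one_mul (σ A)]
    congr 1
    rw [← hone]
    ring
  · show (T - (M : ℝ≥0∞) * u) / T * σ Set.univ < u
    rw [← hT, ENNReal.div_mul_cancel hT0 hT_top]
    refine ENNReal.sub_lt_of_lt_add hM1 ?_
    calc T < ((M + 1 : ℕ) : ℝ≥0∞) * u := hM2
      _ = u + (M : ℝ≥0∞) * u := by push_cast; ring
  · exact hfac (ENNReal.div_le_of_le_mul (by simpa using tsub_le_self (a := T) (b := (M:ℝ≥0∞) * u)))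
  · show u / T * σ Set.univ = u
    rw [← hT, ENNReal.div_mul_cancel hT0 hT_top]
  · exact hfac (ENNReal.div_le_of_le_mul (by simpa using hlt))

end carveNode

section halves
variable {d : ℕ}

/-- The orthant piece of the cube determined by signs `ε`. -/
def half (c : Fin d → ℝ) (ε : Fin d → Bool) : Set (Fin d → ℝ) :=
  ⋂ j, (fun x : Fin d → ℝ => x j) ⁻¹' (if ε j then Set.Ioi (c j) else Set.Iic (c j))

/-- Center of the subcube. -/
noncomputable def cent (c : Fin d → ℝ) (s : ℝ) (ε : Fin d → Bool) : Fin d → ℝ :=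
  fun j => if ε j then c j + s / 2 else c j - s / 2

lemma measurableSet_half (c : Fin d → ℝ) (ε : Fin d → Bool) : MeasurableSet (half c ε) := by
  refine MeasurableSet.iInter fun j => (measurable_pi_apply j) ?_
  cases ε j <;> simp [measurableSet_Ioi, measurableSet_Iic]

lemma mem_half_iff {c : Fin d → ℝ} {ε : Fin d → Bool} {x : Fin d → ℝ} :
    x ∈ half c ε ↔ ∀ j, if ε j then c j < x j else x j ≤ c j := by
  simp only [half, Set.mem_iInter, Set.mem_preimage]
  refine forall_congr' fun j => ?_
  cases ε j <;> simp

lemma half_disjoint {c : Fin d → ℝ} : Pairwise (Function.onFun Disjoint (half c)) := by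
  intro ε ε' hne
  rw [Function.onFun, Set.disjoint_left]
  intro x hx hx'
  apply hne
  funext j
  have h1 := mem_half_iff.mp hx j
  have h2 := mem_half_iff.mp hx' j
  by_contra hj
  cases hb : ε j <;> cases hb' : ε' j <;> simp [hb, hb'] at h1 h2 hj <;> linarith

lemma half_cover {c : Fin d → ℝ} : (⋃ ε, half c ε) = Set.univ := by
  refine Set.eq_univ_of_forall fun x => Set.mem_iUnion.mpr ⟨fun j => decide (c j < x j), ?_⟩
  rw [mem_half_iff]
  intro j
  by_cases h : c j < x j <;> simp [h] <;> linarith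

lemma mem_half_ball {c x : Fin d → ℝ} {s : ℝ} (hs : 0 ≤ s) {ε : Fin d → Bool}
    (hx1 : x ∈ half c ε) (hx2 : x ∈ closedBall c s) :
    x ∈ closedBall (cent c s ε) (s / 2) := by
  rw [mem_closedBall] at hx2 ⊢
  rw [dist_pi_le_iff (by positivity)]
  intro j
  have hj := dist_le_pi_dist x c j |>.trans hx2
  have hε := mem_half_iff.mp hx1 j
  rw [Real.dist_eq] at hj
  rw [Real.dist_eq, cent]
  rw [abs_le] at hj
  cases hb : ε j <;> simp [hb] at hε ⊢ <;> rw [abs_le] <;> constructor <;> linarith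

lemma restrict_half_sum (σ : Measure (Fin d → ℝ)) (c : Fin d → ℝ) :
    ∑ ε : Fin d → Bool, σ.restrict (half c ε) = σ := by
  ext A hA
  rw [Measure.finset_sum_apply]
  simp_rw [Measure.restrict_apply hA]
  rw [← tsum_fintype (L := SummationFilter.unconditional _), ← measure_iUnion ?_ (fun ε => hA.inter (measurableSet_half c ε))]
  · rw [← Set.inter_iUnion, half_cover, Set.inter_univ]
  · intro ε ε' hne
    exact (half_disjoint hne).mono Set.inter_subset_right Set.inter_subset_right

end halves

lemma length_filter_map' {α β : Type*} (f : α → β) (l : List α) (p : β → Bool) :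
    ((l.map f).filter p).length = (l.filter (fun a => p (f a))).length := by
  induction l with
  | nil => simp
  | cons h t ih => by_cases hp : p (f h) <;> simp [hp, ih]

section carve
variable {d n : ℕ}

lemma carve (hn : 0 < n) (L : ℕ) :
    ∀ (σ : Measure (Fin d → ℝ)), IsFiniteMeasure σ →
      ∀ (c : Fin d → ℝ) (s : ℝ), 0 ≤ s → σ (closedBall c s)ᶜ = 0 →
    ∃ (P : List (Measure (Fin d → ℝ) × (Fin d → ℝ) × ℕ)) (δ : Measure (Fin d → ℝ)),
      σ = (P.map Prod.fst).sum + δ ∧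
      δ ≤ σ ∧ δ Set.univ < (n : ℝ≥0∞)⁻¹ ∧
      (∀ x ∈ P, x.1 Set.univ = (n : ℝ≥0∞)⁻¹ ∧
        x.1 (closedBall x.2.1 (s / 2 ^ x.2.2))ᶜ = 0 ∧ x.2.2 ≤ L) ∧
      (∀ j : ℕ, j < L →
        (P.filter (fun x => x.2.2 ≤ j)).length ≤ 2 ^ ((j + 1) * d) - 1) := by
  induction L with
  | zero =>
    intro σ hfin c s hs hsupp
    haveI := hfin
    obtain ⟨M, τ, δ, hdecomp, hδu, hδle, hMle, hτ⟩ := carve_node σ hn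
    refine ⟨List.replicate M (τ, c, 0), δ, ?_, hδle, hδu, ?_, ?_⟩
    · rw [List.map_replicate, List.sum_replicate, ← Nat.cast_smul_eq_nsmul ℝ≥0∞]
      exact hdecomp
    · intro x hx
      have hM0 : M ≠ 0 := (List.mem_replicate.mp hx).1
      have hx' : x = (τ, c, 0) := (List.mem_replicate.mp hx).2
      obtain ⟨hmass, hle⟩ := hτ hM0
      subst hx'
      refine ⟨hmass, ?_, le_refl 0⟩
      have := Measure.le_iff.mp hle (closedBall c s)ᶜ measurableSet_closedBall.compl
      simp only [pow_zero, div_one]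
      exact le_antisymm (hsupp ▸ this) (zero_le)
    · intro j hj; omega
  | succ L ih =>
    intro σ hfin c s hs hsupp
    haveI := hfin
    set u : ℝ≥0∞ := (n : ℝ≥0∞)⁻¹ with hu
    have hu_top : u ≠ ∞ := by simp [hu, hn.ne']
    -- children
    have hsub : ∀ ε : Fin d → Bool,
        (σ.restrict (half c ε)) (closedBall (cent c s ε) (s / 2))ᶜ = 0 := by
      intro ε
      rw [Measure.restrict_apply measurableSet_closedBall.compl]
      refine le_antisymm (le_trans (measure_mono ?_) hsupp.le) (zero_le)
      intro x hx
      simp only [Set.mem_inter_iff, Set.mem_compl_iff] at hx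
      simp only [Set.mem_compl_iff]
      intro hball
      exact hx.1 (mem_half_ball hs hx.2 hball)
    have H : ∀ ε : Fin d → Bool,
        ∃ (P : List (Measure (Fin d → ℝ) × (Fin d → ℝ) × ℕ)) (δc : Measure (Fin d → ℝ)),
        σ.restrict (half c ε) = (P.map Prod.fst).sum + δc ∧
        δc ≤ σ.restrict (half c ε) ∧ δc Set.univ < u ∧
        (∀ x ∈ P, x.1 Set.univ = u ∧
          x.1 (closedBall x.2.1 ((s / 2) / 2 ^ x.2.2))ᶜ = 0 ∧ x.2.2 ≤ L) ∧
        (∀ j : ℕ, j < L →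
          (P.filter (fun x => x.2.2 ≤ j)).length ≤ 2 ^ ((j + 1) * d) - 1) :=
      fun ε => ih (σ.restrict (half c ε)) inferInstance (cent c s ε) (s / 2)
        (by positivity) (hsub ε)
    choose Pc δc hdec hdle hdu hmem hcount using H
    set δtot : Measure (Fin d → ℝ) := ∑ ε, δc ε with hδtot
    haveI : ∀ ε : Fin d → Bool, IsFiniteMeasure (δc ε) := by
      intro ε
      exact ⟨(hdu ε).trans_le le_top⟩
    have hδtot_le : δtot ≤ σ := by
      refine Measure.le_iff.mpr fun A hA => ?_
      rw [hδtot, Measure.finset_sum_apply]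
      calc ∑ ε : Fin d → Bool, δc ε A
          ≤ ∑ ε : Fin d → Bool, (σ.restrict (half c ε)) A :=
            Finset.sum_le_sum fun ε _ => Measure.le_iff.mp (hdle ε) A hA
        _ = (∑ ε : Fin d → Bool, σ.restrict (half c ε)) A :=
            (Measure.finset_sum_apply _ _ _).symm
        _ = σ A := by rw [restrict_half_sum σ c]
    have hδtot_supp : δtot (closedBall c s)ᶜ = 0 := by
      refine le_antisymm ?_ (zero_le)
      exact hsupp ▸ Measure.le_iff.mp hδtot_le _ measurableSet_closedBall.compl
    -- total remainder mass < 2^d * u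
    have hδtot_lt : δtot Set.univ < ((2 ^ d : ℕ) : ℝ≥0∞) * u := by
      have hne : ∀ ε : Fin d → Bool, δc ε Set.univ ≠ ∞ :=
        fun ε => ((hdu ε).trans_le le_top).ne
      have h1 : δtot Set.univ = ∑ ε : Fin d → Bool, δc ε Set.univ :=
        Measure.finset_sum_apply _ _ _
    -- real comparison
      have h2 : (δtot Set.univ).toReal < (2 ^ d : ℕ) * u.toReal := by
        rw [h1, ENNReal.toReal_sum (fun ε _ => hne ε)]
        calc ∑ ε : Fin d → Bool, (δc ε Set.univ).toReal
            < ∑ _ε : Fin d → Bool, u.toReal := by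
              refine Finset.sum_lt_sum_of_nonempty Finset.univ_nonempty fun ε _ => ?_
              exact ENNReal.toReal_lt_toReal (hne ε) hu_top |>.mpr (hdu ε)
          _ = (2 ^ d : ℕ) * u.toReal := by
              rw [Finset.sum_const, Finset.card_univ]
              simp [Fintype.card_fun, nsmul_eq_mul]
      have hfin1 : δtot Set.univ ≠ ∞ := by
        rw [h1]; exact (ENNReal.sum_lt_top.mpr fun ε _ => (hne ε).lt_top).ne
      have hfin2 : ((2 ^ d : ℕ) : ℝ≥0∞) * u ≠ ∞ := ENNReal.mul_ne_top (by simp) hu_top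
      refine (ENNReal.toReal_lt_toReal hfin1 hfin2).mp ?_
      rw [ENNReal.toReal_mul]
      have h3 : ((2 ^ d : ℕ) : ℝ≥0∞).toReal = ((2 ^ d : ℕ) : ℝ) := by simp
      rw [h3]
      exact h2
    obtain ⟨M₀, τ₀, δ, hdecomp₀, hδu, hδle, hM₀le, hτ₀⟩ := carve_node δtot hn
    have hM₀lt : M₀ < 2 ^ d := by
      have := hM₀le.trans_lt hδtot_lt
      have := (ENNReal.mul_left_strictMono (by simp [hu, hn.ne']) hu_top).lt_iff_lt.mp this
      exact_mod_cast this
    -- assemble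
    have key : ∀ A B S M : ℕ, 1 ≤ B → M < A → S ≤ A * (B - 1) → M + S ≤ A * B - 1 := by
      intro A B S M hB hM hS
      refine Nat.le_sub_one_of_lt ?_
      obtain ⟨B', rfl⟩ := Nat.exists_eq_add_of_le hB
      have e1 : A * (1 + B' - 1) = A * B' := by congr 1; omega
      rw [e1] at hS
      calc M + S + 1 = (M + 1) + S := by ring
        _ ≤ A + A * B' := Nat.add_le_add hM hS
        _ = A * (1 + B') := by ring
    set bump : (Measure (Fin d → ℝ) × (Fin d → ℝ) × ℕ) → (Measure (Fin d → ℝ) × (Fin d → ℝ) × ℕ) :=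
      fun x => (x.1, x.2.1, x.2.2 + 1) with hbump
    set children : List (List (Measure (Fin d → ℝ) × (Fin d → ℝ) × ℕ)) :=
      (Finset.univ : Finset (Fin d → Bool)).toList.map (fun ε => (Pc ε).map bump) with hchildren
    refine ⟨List.replicate M₀ (τ₀, c, 0) ++ children.flatten, δ, ?_, hδle.trans hδtot_le, hδu, ?_, ?_⟩
    · -- decomposition
      have hsum : ((List.replicate M₀ ((τ₀, c, 0) : Measure (Fin d → ℝ) × (Fin d → ℝ) × ℕ)
            ++ children.flatten).map Prod.fst).sum
          = (M₀ : ℝ≥0∞) • τ₀ + ∑ ε : Fin d → Bool, ((Pc ε).map Prod.fst).sum := by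
        rw [List.map_append, List.sum_append, List.map_replicate, List.sum_replicate,
          ← Nat.cast_smul_eq_nsmul ℝ≥0∞, sum_flatten_map]
        congr 1
        rw [hchildren, List.map_map]
        have e2 : ((fun l => (List.map Prod.fst l).sum) ∘ fun ε => List.map bump (Pc ε))
            = fun ε : Fin d → Bool => ((Pc ε).map Prod.fst).sum := by
          funext ε
          simp only [Function.comp_apply, List.map_map]
          rfl
        rw [e2, sum_toList_map]
      rw [hsum]
      calc σ = ∑ ε : Fin d → Bool, σ.restrict (half c ε) := (restrict_half_sum σ c).symm
        _ = ∑ ε : Fin d → Bool, (((Pc ε).map Prod.fst).sum + δc ε) := by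
            exact Finset.sum_congr rfl fun ε _ => hdec ε
        _ = (∑ ε : Fin d → Bool, ((Pc ε).map Prod.fst).sum) + δtot := by
            rw [Finset.sum_add_distrib, hδtot]
        _ = (∑ ε : Fin d → Bool, ((Pc ε).map Prod.fst).sum) + ((M₀ : ℝ≥0∞) • τ₀ + δ) := by
            rw [← hdecomp₀]
        _ = (M₀ : ℝ≥0∞) • τ₀ + (∑ ε : Fin d → Bool, ((Pc ε).map Prod.fst).sum) + δ := by
            rw [← add_assoc, add_comm (∑ ε : Fin d → Bool, ((Pc ε).map Prod.fst).sum)]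
    · -- membership
      intro x hx
      rcases List.mem_append.mp hx with hx | hx
      · have hM0 : M₀ ≠ 0 := (List.mem_replicate.mp hx).1
        have hx' : x = (τ₀, c, 0) := (List.mem_replicate.mp hx).2
        obtain ⟨hmass, hle⟩ := hτ₀ hM0
        subst hx'
        refine ⟨hmass, ?_, Nat.zero_le _⟩
        have := Measure.le_iff.mp hle (closedBall c s)ᶜ measurableSet_closedBall.compl
        simp only [pow_zero, div_one]
        exact le_antisymm (hδtot_supp ▸ this) (zero_le)
      · obtain ⟨l, hl, hxl⟩ := List.mem_flatten.mp hx
        rw [hchildren] at hl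
        obtain ⟨ε, hε, rfl⟩ := List.mem_map.mp hl
        obtain ⟨y, hy, rfl⟩ := List.mem_map.mp hxl
        obtain ⟨hmass, hsupp', htag⟩ := hmem ε y hy
        refine ⟨hmass, ?_, Nat.succ_le_succ htag⟩
        have e3 : s / 2 ^ ((bump y).2.2) = s / 2 / 2 ^ y.2.2 := by
          rw [hbump, div_div]
          congr 1
          ring
        rw [e3]
        exact hsupp'
    · -- counting
      intro j hj
      rw [List.filter_append, List.length_append, List.filter_replicate,
        if_pos (by simp), List.length_replicate,
        length_filter_flatten, hchildren, List.map_map]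
      have e4 : ∀ ε : Fin d → Bool,
          ((fun l => (List.filter (fun x : Measure (Fin d → ℝ) × (Fin d → ℝ) × ℕ =>
              decide (x.2.2 ≤ j)) l).length) ∘ fun ε => List.map bump (Pc ε)) ε
          = ((Pc ε).filter (fun y : Measure (Fin d → ℝ) × (Fin d → ℝ) × ℕ =>
              decide (y.2.2 + 1 ≤ j))).length := by
        intro ε
        simp only [Function.comp_apply]
        rw [length_filter_map']
      rw [List.map_congr_left (fun ε _ => e4 ε), sum_toList_map]
      cases j with
      | zero =>
        have e5 : ∀ ε : Fin d → Bool,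
            ((Pc ε).filter (fun y : Measure (Fin d → ℝ) × (Fin d → ℝ) × ℕ =>
              decide (y.2.2 + 1 ≤ 0))).length = 0 := by
          intro ε
          simp
        have e5' : (0 + 1) * d = d := by ring
        rw [Finset.sum_congr rfl fun ε _ => e5 ε, e5']
        simp only [Finset.sum_const_zero, add_zero]
        omega
      | succ j' =>
        have hj' : j' < L := by omega
        have e6 : ∀ ε : Fin d → Bool,
            ((Pc ε).filter (fun y : Measure (Fin d → ℝ) × (Fin d → ℝ) × ℕ =>
              decide (y.2.2 + 1 ≤ j' + 1))).length ≤ 2 ^ ((j' + 1) * d) - 1 := by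
          intro ε
          have e7 : (fun y : Measure (Fin d → ℝ) × (Fin d → ℝ) × ℕ =>
              decide (y.2.2 + 1 ≤ j' + 1)) = (fun y => decide (y.2.2 ≤ j')) := by
            funext y
            simp
          rw [e7]
          exact hcount ε j' hj'
        have hS : ∑ ε : Fin d → Bool,
            ((Pc ε).filter (fun y : Measure (Fin d → ℝ) × (Fin d → ℝ) × ℕ =>
              decide (y.2.2 + 1 ≤ j' + 1))).length ≤ 2 ^ d * (2 ^ ((j' + 1) * d) - 1) := by
          calc _ ≤ (Finset.univ : Finset (Fin d → Bool)).card • (2 ^ ((j' + 1) * d) - 1) :=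
                Finset.sum_le_card_nsmul _ _ _ fun ε _ => e6 ε
            _ = 2 ^ d * (2 ^ ((j' + 1) * d) - 1) := by
                rw [Finset.card_univ, smul_eq_mul]
                congr 1
                simp [Fintype.card_fun]
        have hpow : 2 ^ ((j' + 1 + 1) * d) = 2 ^ d * 2 ^ ((j' + 1) * d) := by
          rw [← pow_add]
          congr 1
          ring
        rw [hpow]
        exact key _ _ _ _ Nat.one_le_two_pow hM₀lt hS

end carve

section moreHelpers
variable {E F : Type*} [MeasurableSpace E] [MeasurableSpace F]

lemma list_sum_apply (l : List (Measure E)) (A : Set E) :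
    l.sum A = (l.map (fun μ => μ A)).sum := by
  induction l with
  | nil => simp
  | cons h t ih => simp [Measure.add_apply, ih]

lemma map_sum_measure {ι : Type*} (s : Finset ι) (μ : ι → Measure E) (f : E → F)
    (hf : Measurable f) : (∑ i ∈ s, μ i).map f = ∑ i ∈ s, (μ i).map f := by
  ext A hA
  rw [Measure.map_apply hf hA, Measure.finset_sum_apply, Measure.finset_sum_apply]
  exact Finset.sum_congr rfl fun i _ => (Measure.map_apply hf hA).symm

end moreHelpers

lemma rad_bound {d : ℕ} (hd : 1 ≤ d) {r : ℝ} (hr : 0 ≤ r) (k ℓ : ℕ)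
    (hk : k + 1 ≤ 2 ^ ((ℓ + 1) * d)) :
    r / 2 ^ ℓ ≤ 4 * r * ((k : ℝ) + 1) ^ (-(1 : ℝ) / d) := by
  have hd' : (0:ℝ) < d := by positivity
  have hkpos : (0:ℝ) < (k : ℝ) + 1 := by positivity
  have key : ((k : ℝ) + 1) ^ ((1:ℝ)/d) ≤ 2 ^ (ℓ + 1) := by
    have hc : ((k : ℝ) + 1) ≤ ((2 ^ ((ℓ + 1) * d) : ℕ) : ℝ) := by exact_mod_cast hk
    calc ((k : ℝ) + 1) ^ ((1:ℝ)/d)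
        ≤ (((2 : ℝ) ^ ((ℓ + 1) * d))) ^ ((1:ℝ)/d) := by
          refine Real.rpow_le_rpow hkpos.le ?_ (by positivity)
          push_cast at hc
          exact hc
      _ = 2 ^ (ℓ + 1) := by
          rw [← Real.rpow_natCast (2:ℝ) ((ℓ + 1) * d), ← Real.rpow_mul (by norm_num),
            ← Real.rpow_natCast (2:ℝ) (ℓ + 1)]
          congr 1
          push_cast
          field_simp
  have h2 : (0:ℝ) < ((k : ℝ) + 1) ^ ((1:ℝ)/d) := Real.rpow_pos_of_pos hkpos _
  have e1 : ((k : ℝ) + 1) ^ (-(1:ℝ)/d) = (((k : ℝ) + 1) ^ ((1:ℝ)/d))⁻¹ := by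
    rw [neg_div, Real.rpow_neg hkpos.le]
  rw [e1]
  have e2 : 4 * r * (((k : ℝ) + 1) ^ ((1:ℝ)/d))⁻¹ = 4 * r / (((k : ℝ) + 1) ^ ((1:ℝ)/d)) := by
    ring
  rw [e2, div_le_div_iff₀ (by positivity) h2]
  have e3 : (2:ℝ) ^ (ℓ + 1) = 2 * 2 ^ ℓ := by ring
  nlinarith [mul_le_mul_of_nonneg_left key hr, pow_pos (show (0:ℝ) < 2 by norm_num) ℓ]

lemma sum_inv_rpow (n d : ℕ) (p : ℝ) (hn : 0 < n) (hd : 0 < d) (hp : 1 ≤ p) (hpd : p < d) :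
    ∑ k ∈ Finset.range n, ((k : ℝ) + 1) ^ (-(p / d)) ≤ (n : ℝ) ^ (1 - p / d) / (1 - p / d) := by
  have hd' : (0:ℝ) < d := by positivity
  set a : ℝ := p / d with ha
  have ha1 : 0 < a := by positivity
  have ha2 : a < 1 := by rw [ha, div_lt_one hd']; exact hpd
  have h1a : 0 < 1 - a := by linarith
  obtain ⟨m, rfl⟩ : ∃ m, n = m + 1 := ⟨n - 1, by omega⟩
  rw [Finset.sum_range_succ']
  have hf0 : (((0:ℕ) : ℝ) + 1) ^ (-a) = 1 := by norm_num
  have htail : ∑ k ∈ Finset.range m, (((k + 1 : ℕ) : ℝ) + 1) ^ (-a)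
      ≤ ((1 + (m:ℝ)) ^ (1 - a) - 1) / (1 - a) := by
    have hanti : AntitoneOn (fun x : ℝ => x ^ (-a)) (Set.Icc 1 (1 + (m:ℕ))) := by
      intro x hx y hy hxy
      exact Real.rpow_le_rpow_of_nonpos (lt_of_lt_of_le one_pos hx.1) hxy (by linarith)
    have hint := hanti.sum_le_integral
    have hval : ∫ x in (1:ℝ)..(1 + (m:ℕ)), x ^ (-a)
        = ((1 + (m:ℝ)) ^ (-a + 1) - 1 ^ (-a + 1)) / (-a + 1) := by
      rw [integral_rpow (Or.inl (by linarith))]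
    calc ∑ k ∈ Finset.range m, (((k + 1 : ℕ) : ℝ) + 1) ^ (-a)
        = ∑ i ∈ Finset.range m, (fun x : ℝ => x ^ (-a)) (1 + ((i + 1 : ℕ) : ℝ)) := by
          refine Finset.sum_congr rfl fun i _ => ?_
          push_cast
          ring_nf
      _ ≤ ∫ x in (1:ℝ)..(1 + (m:ℕ)), x ^ (-a) := hint
      _ = ((1 + (m:ℝ)) ^ (-a + 1) - 1 ^ (-a + 1)) / (-a + 1) := hval
      _ = ((1 + (m:ℝ)) ^ (1 - a) - 1) / (1 - a) := by
          rw [Real.one_rpow, show -a + 1 = 1 - a from by ring]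
  have hcast : ((m + 1 : ℕ) : ℝ) = 1 + (m : ℝ) := by push_cast; ring
  rw [hf0, hcast]
  have := htail
  rw [sub_div] at this
  have hone : (1:ℝ) ≤ 1 / (1 - a) := by
    rw [le_div_iff₀ h1a]
    linarith
  linarith

lemma list_map_sum_get {α : Type*} {M : Type*} [AddCommMonoid M] (l : List α) (f : α → M) :
    ∑ i : Fin l.length, f (l.get i) = (l.map f).sum := by
  induction l with
  | nil => simp
  | cons a t ih => simp [Fin.sum_univ_succ, ih]

/-- The `p`-th power Wasserstein transport cost between two measures of equal mass,
defined as the infimum over couplings of `∫ ‖x - y‖ ^ p`. -/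
noncomputable def WpCost {d : ℕ} (p : ℝ) (μ ν : Measure (Fin d → ℝ)) : ℝ≥0∞ :=
  ⨅ (π : Measure ((Fin d → ℝ) × (Fin d → ℝ))) (_ : π.map Prod.fst = μ)
    (_ : π.map Prod.snd = ν), ∫⁻ q, ENNReal.ofReal (‖q.1 - q.2‖ ^ p) ∂π

theorem empirical_quantization_subcritical (d n : ℕ) (hd : 1 ≤ d) (hn : 1 ≤ n)
    (p : ℝ) (hp : 1 ≤ p) (hpd : p < d) (r : ℝ) (hr : 0 ≤ r)
    (ρ : Measure (Fin d → ℝ)) [IsProbabilityMeasure ρ]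
    (hsupp : ρ (closedBall 0 r)ᶜ = 0) :
    ∃ x : Fin n → (Fin d → ℝ),
      (WpCost p ((n : ℝ≥0∞)⁻¹ • ∑ k, Measure.dirac (x k)) ρ) ^ ((1 : ℝ) / p) ≤
        ENNReal.ofReal (4 * r * ((d / (d - p)) ^ ((1 : ℝ) / p) * (n : ℝ) ^ (-(1 : ℝ) / d))) := by
  classical
  have hn0 : 0 < n := hn
  set u : ℝ≥0∞ := (n : ℝ≥0∞)⁻¹ with hu
  have hu_top : u ≠ ∞ := by simp [hu, hn0.ne']
  have hu0 : u ≠ 0 := by simp [hu]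
  obtain ⟨P, δ, hdec, hδle, hδu, hmem, hcount⟩ :=
    carve (d := d) (n := n) hn0 n ρ inferInstance 0 r hr hsupp
  -- sort by depth tag
  set lef : (Measure (Fin d → ℝ) × (Fin d → ℝ) × ℕ) →
      (Measure (Fin d → ℝ) × (Fin d → ℝ) × ℕ) → Bool := fun a b => decide (a.2.2 ≤ b.2.2)
    with hlef
  set Q := P.mergeSort lef with hQdef
  have hperm : Q.Perm P := List.mergeSort_perm P lef
  have hsortedQ : List.Pairwise (fun a b => lef a b = true) Q :=
    List.pairwise_mergeSort (by intro a b c; simp only [hlef, decide_eq_true_eq]; omega)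
      (by intro a b; simp only [hlef, Bool.or_eq_true, decide_eq_true_eq]; omega) P
  have hsumQ : (Q.map Prod.fst).sum = (P.map Prod.fst).sum := (hperm.map _).sum_eq
  have hmemQ : ∀ x ∈ Q, x.1 Set.univ = u ∧
      x.1 (closedBall x.2.1 (r / 2 ^ x.2.2))ᶜ = 0 ∧ x.2.2 ≤ n :=
    fun x hx => hmem x (hperm.subset hx)
  have hcountQ : ∀ j : ℕ, j < n →
      (Q.filter (fun x => x.2.2 ≤ j)).length ≤ 2 ^ ((j + 1) * d) - 1 := by
    intro j hj
    rw [(hperm.filter _).length_eq]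
    exact hcount j hj
  -- Q has length n and δ = 0
  have hρuniv : ρ Set.univ = 1 := measure_univ
  have hmass : ρ Set.univ = (Q.length : ℝ≥0∞) * u + δ Set.univ := by
    conv_lhs => rw [hdec]
    rw [Measure.add_apply, ← hsumQ, list_sum_apply]
    congr 1
    have : (Q.map Prod.fst).map (fun μ => μ Set.univ) = List.replicate Q.length u := by
      refine List.eq_replicate_iff.mpr ⟨by simp, ?_⟩
      intro b hb
      simp only [List.map_map, List.mem_map] at hb
      obtain ⟨x, hx, rfl⟩ := hb
      exact (hmemQ x hx).1
    rw [this, List.sum_replicate, ← Nat.cast_smul_eq_nsmul ℝ≥0∞, smul_eq_mul]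
  have hlenle : (Q.length : ℝ≥0∞) * u ≤ 1 := by
    rw [hρuniv] at hmass
    rw [hmass]
    exact le_add_right le_rfl
  have hnu : (n : ℝ≥0∞) * u = 1 := by
    rw [hu]
    exact ENNReal.mul_inv_cancel (by exact_mod_cast hn0.ne') (by simp)
  have hlen : Q.length = n := by
    have h1 : Q.length ≤ n := by
      have := hlenle
      rw [← hnu] at this
      exact_mod_cast (ENNReal.mul_le_mul_iff_left hu0 hu_top).mp this
    have h2 : n < Q.length + 1 := by
      have hlt : (1:ℝ≥0∞) < ((Q.length + 1 : ℕ) : ℝ≥0∞) * u := by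
        rw [hρuniv] at hmass
        calc (1:ℝ≥0∞) = (Q.length : ℝ≥0∞) * u + δ Set.univ := hmass
          _ < (Q.length : ℝ≥0∞) * u + u := by
              refine ENNReal.add_lt_add_left ?_ hδu
              exact ENNReal.mul_ne_top (by simp) hu_top
          _ = ((Q.length + 1 : ℕ) : ℝ≥0∞) * u := by push_cast; ring
      rw [← hnu] at hlt
      exact_mod_cast (ENNReal.mul_left_strictMono hu0 hu_top).lt_iff_lt.mp hlt
    omega
  have hδ0 : δ = 0 := by
    refine Measure.measure_univ_eq_zero.mp ?_
    rw [hρuniv, hlen, hnu] at hmass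
    have h3 : (1:ℝ≥0∞) + 0 = 1 + δ Set.univ := by rw [add_zero]; exact hmass
    exact ((ENNReal.add_right_inj (by simp)).mp h3).symm
  have hρQ : ρ = (Q.map Prod.fst).sum := by
    rw [hdec, hδ0, add_zero, hsumQ]
  refine ⟨fun k => (Q.get ⟨k, by rw [hlen]; exact k.isLt⟩).2.1, ?_⟩
  have hlenk : ∀ k : Fin n, (k : ℕ) < Q.length := fun k => by rw [hlen]; exact k.isLt
  set xs : Fin n → (Fin d → ℝ) := fun k => (Q.get ⟨k, hlenk k⟩).2.1 with hxs
  set ms : Fin n → Measure (Fin d → ℝ) := fun k => (Q.get ⟨k, hlenk k⟩).1 with hms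
  set tg : Fin n → ℕ := fun k => (Q.get ⟨k, hlenk k⟩).2.2 with htg
  have hgetmem : ∀ k : Fin n, Q.get ⟨k, hlenk k⟩ ∈ Q := fun k => Q.get_mem _
  have hmassk : ∀ k, ms k Set.univ = u := fun k => (hmemQ _ (hgetmem k)).1
  have hsuppk : ∀ k, ms k (closedBall (xs k) (r / 2 ^ tg k))ᶜ = 0 :=
    fun k => (hmemQ _ (hgetmem k)).2.1
  have htgk : ∀ k, tg k ≤ n := fun k => (hmemQ _ (hgetmem k)).2.2
  -- index bound
  have hidx : ∀ k : Fin n, (k : ℕ) + 1 ≤ 2 ^ ((tg k + 1) * d) := by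
    intro k
    by_cases hcase : tg k < n
    · have hmono : ∀ (i : ℕ) (hi : i < Q.length), i ≤ (k : ℕ) →
          (Q.get ⟨i, hi⟩).2.2 ≤ tg k := by
        intro i hi hik
        rcases Nat.lt_or_ge i (k : ℕ) with h | h
        · have h2 := List.pairwise_iff_getElem.mp hsortedQ i k hi (hlenk k) h
          simp only [hlef, decide_eq_true_eq] at h2
          exact h2
        · have hik' : i = (k : ℕ) := by omega
          subst hik'
          exact le_rfl
      have htake : (Q.take ((k : ℕ) + 1)).filter (fun y => decide (y.2.2 ≤ tg k))
          = Q.take ((k : ℕ) + 1) := by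
        refine List.filter_eq_self.mpr ?_
        intro a ha
        rw [List.mem_take_iff_getElem] at ha
        obtain ⟨i, hi, rfl⟩ := ha
        simp only [decide_eq_true_eq]
        have hi1 : i < Q.length := lt_of_lt_of_le hi (by omega)
        exact hmono i hi1 (by omega)
      have hlen_take : ((Q.take ((k : ℕ) + 1)).filter
          (fun y => decide (y.2.2 ≤ tg k))).length = (k : ℕ) + 1 := by
        rw [htake, List.length_take]
        have := hlenk k
        omega
      have hsubl : ((Q.take ((k : ℕ) + 1)).filter (fun y => decide (y.2.2 ≤ tg k))).length
          ≤ ((Q.filter (fun y => decide (y.2.2 ≤ tg k)))).length :=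
        ((List.take_sublist _ _).filter _).length_le
      have hcq := hcountQ (tg k) hcase
      have hone : 1 ≤ 2 ^ ((tg k + 1) * d) := Nat.one_le_two_pow
      omega
    · have htgn : tg k = n := by have := htgk k; omega
      have h1 : (k : ℕ) + 1 ≤ n := k.isLt
      have h2 : n < 2 ^ n := Nat.lt_two_pow_self
      have h4 : n + 1 ≤ (n + 1) * d := Nat.le_mul_of_pos_right _ hd
      have h3 : 2 ^ n ≤ 2 ^ ((tg k + 1) * d) := by
        refine Nat.pow_le_pow_right (by norm_num) ?_
        rw [htgn]
        omega
      calc (k : ℕ) + 1 ≤ n := h1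
        _ ≤ 2 ^ n := h2.le
        _ ≤ 2 ^ ((tg k + 1) * d) := h3
  -- coupling
  set π : Measure ((Fin d → ℝ) × (Fin d → ℝ)) :=
    ∑ k : Fin n, (ms k).map (fun y => (xs k, y)) with hπ
  have hpairmeas : ∀ k : Fin n, Measurable (fun y : Fin d → ℝ => (xs k, y)) :=
    fun k => measurable_const.prodMk measurable_id
  have hmfst : π.map Prod.fst = u • ∑ k : Fin n, Measure.dirac (xs k) := by
    rw [hπ, map_sum_measure _ _ _ measurable_fst, Finset.smul_sum]
    refine Finset.sum_congr rfl fun k _ => ?_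
    rw [Measure.map_map measurable_fst (hpairmeas k)]
    have he : (Prod.fst ∘ fun y : Fin d → ℝ => (xs k, y)) = fun _ => xs k := rfl
    rw [he, Measure.map_const, hmassk]
  have hmsnd : π.map Prod.snd = ρ := by
    rw [hπ, map_sum_measure _ _ _ measurable_snd]
    have he : ∀ k : Fin n, ((ms k).map (fun y => (xs k, y))).map Prod.snd = ms k := by
      intro k
      rw [Measure.map_map measurable_snd (hpairmeas k)]
      have he2 : (Prod.snd ∘ fun y : Fin d → ℝ => (xs k, y)) = id := rfl
      rw [he2, Measure.map_id]
    rw [Finset.sum_congr rfl fun k _ => he k, hρQ]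
    have he3 : ∑ k : Fin n, ms k = ∑ i : Fin Q.length, (Q.get i).1 :=
      Fin.sum_congr' (fun i : Fin Q.length => (Q.get i).1) hlen.symm
    rw [he3, list_map_sum_get]
  -- cost estimate
  have hppos : (0:ℝ) < p := lt_of_lt_of_le one_pos hp
  have hdpos : (0:ℝ) < d := by positivity
  have hdp : (0:ℝ) < (d:ℝ) - p := by linarith
  set Rk : Fin n → ℝ := fun k => 4 * r * ((k : ℝ) + 1) ^ (-(1:ℝ)/d) with hRk
  have hRk_nonneg : ∀ k, 0 ≤ Rk k := by
    intro k
    have : (0:ℝ) < ((k : ℝ) + 1) ^ (-(1:ℝ)/d) := Real.rpow_pos_of_pos (by positivity) _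
    positivity
  have hrad : ∀ k, r / 2 ^ tg k ≤ Rk k := fun k => rad_bound hd hr k (tg k) (hidx k)
  have hFmeas : Measurable
      (fun q : (Fin d → ℝ) × (Fin d → ℝ) => ENNReal.ofReal (‖q.1 - q.2‖ ^ p)) := by
    have hcont : Continuous (fun q : (Fin d → ℝ) × (Fin d → ℝ) => ‖q.1 - q.2‖ ^ p) :=
      ((continuous_fst.sub continuous_snd).norm).rpow_const fun q => Or.inr hppos.le
    exact hcont.measurable.ennreal_ofReal
  have hterm : ∀ k : Fin n, ∫⁻ y, ENNReal.ofReal (‖xs k - y‖ ^ p) ∂(ms k)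
      ≤ ENNReal.ofReal (Rk k ^ p) * u := by
    intro k
    have hae : ∀ᵐ y ∂(ms k),
        ENNReal.ofReal (‖xs k - y‖ ^ p) ≤ ENNReal.ofReal (Rk k ^ p) := by
      rw [Filter.eventually_iff, mem_ae_iff]
      refine measure_mono_null ?_ (hsuppk k)
      intro y hy
      simp only [Set.mem_compl_iff, Set.mem_setOf_eq] at hy ⊢
      intro hball
      apply hy
      refine ENNReal.ofReal_le_ofReal ?_
      refine Real.rpow_le_rpow (norm_nonneg _) ?_ hppos.le
      have he : ‖xs k - y‖ = dist (xs k) y := (dist_eq_norm _ _).symm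
      rw [he, dist_comm]
      exact le_trans (mem_closedBall.mp hball) (hrad k)
    calc ∫⁻ y, ENNReal.ofReal (‖xs k - y‖ ^ p) ∂(ms k)
        ≤ ∫⁻ _, ENNReal.ofReal (Rk k ^ p) ∂(ms k) := lintegral_mono_ae hae
      _ = ENNReal.ofReal (Rk k ^ p) * u := by rw [lintegral_const, hmassk]
  have htotal : (∫⁻ q, ENNReal.ofReal (‖q.1 - q.2‖ ^ p) ∂π)
      ≤ (∑ k : Fin n, ENNReal.ofReal (Rk k ^ p)) * u := by
    rw [hπ, lintegral_finset_sum_measure, Finset.sum_mul]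
    refine Finset.sum_le_sum fun k _ => ?_
    rw [lintegral_map hFmeas (hpairmeas k)]
    exact hterm k
  -- numeric bound on the sum
  have hsum_bound : ∑ k : Fin n, Rk k ^ p
      ≤ (4 * r) ^ p * ((n : ℝ) ^ (1 - p / d) / (1 - p / d)) := by
    have hterm2 : ∀ k : Fin n, Rk k ^ p = (4 * r) ^ p * ((k : ℝ) + 1) ^ (-(p / (d:ℝ))) := by
      intro k
      rw [hRk]
      have hb : (0:ℝ) ≤ ((k : ℝ) + 1) ^ (-(1:ℝ)/d) :=
        (Real.rpow_pos_of_pos (by positivity) _).le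
      rw [Real.mul_rpow (by positivity) hb,
        ← Real.rpow_mul (by positivity : (0:ℝ) ≤ (k : ℝ) + 1)]
      congr 1
      ring
    rw [Finset.sum_congr rfl fun k _ => hterm2 k, ← Finset.mul_sum]
    refine mul_le_mul_of_nonneg_left ?_ (by positivity)
    rw [Fin.sum_univ_eq_sum_range (fun i => ((i : ℝ) + 1) ^ (-(p / (d:ℝ))))]
    exact sum_inv_rpow n d p hn0 hd hp hpd
  -- final chain
  set B : ℝ := (4 * r) ^ p * ((d:ℝ) / ((d:ℝ) - p)) * (n : ℝ) ^ (-(p / (d:ℝ))) with hB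
  have hB_nonneg : 0 ≤ B := by
    have h1 : (0:ℝ) < (n : ℝ) ^ (-(p / (d:ℝ))) := Real.rpow_pos_of_pos (by positivity) _
    have h2 : (0:ℝ) ≤ (d:ℝ) / ((d:ℝ) - p) := by positivity
    positivity
  have hmul : (∑ k : Fin n, ENNReal.ofReal (Rk k ^ p)) * u ≤ ENNReal.ofReal B := by
    have h1 : ∑ k : Fin n, ENNReal.ofReal (Rk k ^ p)
        = ENNReal.ofReal (∑ k : Fin n, Rk k ^ p) :=
      (ENNReal.ofReal_sum_of_nonneg fun k _ => by
        have := hRk_nonneg k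
        positivity).symm
    have hueq : u = ENNReal.ofReal ((n : ℝ)⁻¹) := by
      rw [hu, ← ENNReal.ofReal_natCast n, ← ENNReal.ofReal_inv_of_pos (by positivity)]
    rw [h1, hueq, ← ENNReal.ofReal_mul (by positivity)]
    refine ENNReal.ofReal_le_ofReal ?_
    have h2 : ∑ k : Fin n, Rk k ^ p ≤ (4 * r) ^ p * ((n : ℝ) ^ (1 - p / d) / (1 - p / d)) :=
      hsum_bound
    have h3 : (4 * r) ^ p * ((n : ℝ) ^ (1 - p / d) / (1 - p / d)) * (n : ℝ)⁻¹ = B := by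
      rw [hB]
      have hnpos : (0:ℝ) < (n : ℝ) := by positivity
      have h4 : (n : ℝ) ^ (1 - p / (d:ℝ)) = (n : ℝ) * (n : ℝ) ^ (-(p / (d:ℝ))) := by
        rw [show (1 - p / (d:ℝ)) = 1 + -(p / (d:ℝ)) from by ring,
          Real.rpow_add hnpos, Real.rpow_one]
      rw [h4]
      have h5 : 1 - p / (d:ℝ) = ((d:ℝ) - p) / d := by field_simp
      rw [h5]
      field_simp
    rw [← h3]
    have hnn : (0:ℝ) ≤ (n:ℝ)⁻¹ := by positivity
    exact mul_le_mul_of_nonneg_right h2 hnn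
  have hW : WpCost p (u • ∑ k : Fin n, Measure.dirac (xs k)) ρ ≤ ENNReal.ofReal B := by
    refine le_trans (iInf_le_of_le π (iInf_le_of_le hmfst (iInf_le_of_le hmsnd le_rfl))) ?_
    exact le_trans htotal hmul
  have hrpow := ENNReal.rpow_le_rpow hW (by positivity : (0:ℝ) ≤ 1 / p)
  refine le_trans hrpow ?_
  rw [ENNReal.ofReal_rpow_of_nonneg hB_nonneg (by positivity)]
  refine ENNReal.ofReal_le_ofReal (le_of_eq ?_)
  rw [hB]
  have hC : (0:ℝ) ≤ (d:ℝ) / ((d:ℝ) - p) := by positivity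
  have hnrp : (0:ℝ) ≤ (n : ℝ) ^ (-(p / (d:ℝ))) := (Real.rpow_pos_of_pos (by positivity) _).le
  rw [Real.mul_rpow (by positivity) hnrp, Real.mul_rpow (by positivity) hC]
  have e1 : ((4 * r) ^ p) ^ ((1:ℝ) / p) = 4 * r := by
    rw [← Real.rpow_mul (show (0:ℝ) ≤ 4 * r by positivity), mul_one_div,
      div_self hppos.ne', Real.rpow_one]
  have e2 : ((n : ℝ) ^ (-(p / (d:ℝ)))) ^ ((1:ℝ) / p) = (n : ℝ) ^ (-(1:ℝ) / (d:ℝ)) := by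
    rw [← Real.rpow_mul (by positivity : (0:ℝ) ≤ (n:ℝ))]
    congr 1
    field_simp
  rw [e1, e2]
  ring
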